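/- The completion of any Urysohn metric space is Urysohn. That is, if (M,d) is a complete metric space of diameter 1 containing a dense subspace A that is Urysohn, then for every finite subset Y ⊆ M and every Katětov function f : Y → [0,1] there exists z ∈ M with d(z,y) = f(y) for all y ∈ Y. -/

import Mathlib

/-- If a complete metric space `M` of diameter ≤ 1 has a dense subset `A` with
the Urysohn property (every Katětov function on a finite subset of `A` is realized by a point
of `A`), then `M` itself realizes every Katětov function on a finite subset of `M`. -/
theorem stmt_7 {M : Type*} [MetricSpace M] [CompleteSpace M]
    (hdiam : ∀ x y : M, dist x y ≤ 1) (A : Set M) (hA : Dense A)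
    (hU : ∀ Y : Finset M, ↑Y ⊆ A → ∀ f : M → ℝ,
      (∀ y ∈ Y, f y ∈ Set.Icc (0 : ℝ) 1) →
      (∀ y ∈ Y, ∀ z ∈ Y, |f y - f z| ≤ dist y z ∧ dist y z ≤ f y + f z) →
      ∃ p ∈ A, ∀ y ∈ Y, dist p y = f y)
    (Y : Finset M) (f : M → ℝ)
    (hf01 : ∀ y ∈ Y, f y ∈ Set.Icc (0 : ℝ) 1)
    (hfk : ∀ y ∈ Y, ∀ z ∈ Y, |f y - f z| ≤ dist y z ∧ dist y z ≤ f y + f z) :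
    ∃ z : M, ∀ y ∈ Y, dist z y = f y := by
  classical
  -- a base point of A
  obtain ⟨p₀, hp₀A, -⟩ := hU ∅ (by simp) (fun _ => 0) (by simp) (by simp)
  rcases Y.eq_empty_or_nonempty with rfl | hne
  · exact ⟨p₀, by simp⟩
  -- global Katětov extension G of f
  set G : M → ℝ := fun x => min 1 (Y.inf' hne fun y => f y + dist x y) with hGdef
  have hGvals : ∀ y ∈ Y, G y = f y := by
    intro y hy
    have h1 : Y.inf' hne (fun z => f z + dist y z) = f y := by
      apply le_antisymm
      · have := Finset.inf'_le (fun z => f z + dist y z) hy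
        simpa only [dist_self, add_zero] using this
      · apply Finset.le_inf'
        intro z hz
        have h2 := (hfk y hy z hz).1
        have := abs_le.1 h2
        linarith [this.1]
    rw [hGdef]
    simp only [h1]
    exact min_eq_right (hf01 y hy).2
  have hG0 : ∀ x, 0 ≤ G x := by
    intro x
    apply le_min zero_le_one
    apply Finset.le_inf'
    intro z hz
    have := (hf01 z hz).1
    have := dist_nonneg (x := x) (y := z)
    linarith
  have hGle1 : ∀ x, G x ≤ 1 := fun x => min_le_left _ _
  -- 1-Lipschitz (one-sided, then abs)
  have hGlip' : ∀ x x' : M, G x ≤ G x' + dist x x' := by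
    intro x x'
    rcases le_or_gt 1 (Y.inf' hne fun y => f y + dist x' y) with h1 | h1
    · have : G x' = 1 := min_eq_left h1
      rw [this]
      have := hGle1 x
      linarith [dist_nonneg (x := x) (y := x')]
    · have hx' : G x' = Y.inf' hne fun y => f y + dist x' y := min_eq_right h1.le
      obtain ⟨z, hz, hz2⟩ := Finset.exists_mem_eq_inf' hne (fun y => f y + dist x' y)
      have : G x ≤ f z + dist x z := by
        refine le_trans (min_le_right _ _) ?_
        exact Finset.inf'_le _ hz
      have htri : dist x z ≤ dist x x' + dist x' z := dist_triangle _ _ _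
      rw [hx', hz2]
      linarith
  have hGabs : ∀ x x' : M, |G x - G x'| ≤ dist x x' := by
    intro x x'
    rw [abs_sub_le_iff]
    constructor
    · have := hGlip' x x'; linarith
    · have := hGlip' x' x; rw [dist_comm] at this; linarith
  -- sum condition
  have hGsum : ∀ x x' : M, dist x x' ≤ G x + G x' := by
    intro x x'
    rcases le_or_gt 1 (Y.inf' hne fun y => f y + dist x y) with h1 | h1
    · have : G x = 1 := min_eq_left h1
      rw [this]
      have := hG0 x'
      have := hdiam x x'
      linarith
    · rcases le_or_gt 1 (Y.inf' hne fun y => f y + dist x' y) with h2 | h2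
      · have : G x' = 1 := min_eq_left h2
        rw [this]
        have := hG0 x
        have := hdiam x x'
        linarith
      · have hx : G x = Y.inf' hne fun y => f y + dist x y := min_eq_right h1.le
        have hx' : G x' = Y.inf' hne fun y => f y + dist x' y := min_eq_right h2.le
        obtain ⟨z, hz, hz2⟩ := Finset.exists_mem_eq_inf' hne (fun y => f y + dist x y)
        obtain ⟨w, hw, hw2⟩ := Finset.exists_mem_eq_inf' hne (fun y => f y + dist x' y)
        have hzw := (hfk z hz w hw).2
        have t1 : dist x x' ≤ dist x z + dist z w + dist w x' := by
          have := dist_triangle x z x'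
          have := dist_triangle z w x'
          linarith
        rw [hx, hx', hz2, hw2]
        have : dist w x' = dist x' w := dist_comm _ _
        linarith
  -- one-step improvement lemma
  have step : ∀ p ∈ A, ∀ ε δ : ℝ, 0 < δ → (∀ y ∈ Y, |dist p y - f y| ≤ ε) →
      ∃ q ∈ A, (∀ y ∈ Y, |dist q y - f y| ≤ 2 * δ) ∧ dist q p ≤ ε + 2 * δ := by
    intro p hp ε δ hδ hpε
    have haux : ∀ y : M, ∃ a, a ∈ A ∧ dist a y ≤ δ := by
      intro y
      obtain ⟨a, haA, had⟩ := hA.exists_dist_lt y hδ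
      exact ⟨a, haA, by rw [dist_comm]; exact had.le⟩
    choose a haA had using haux
    set ε' : ℝ := Y.sup' hne (fun y => |dist p (a y) - G (a y)|) with hε'def
    have hε'ge : ∀ y ∈ Y, |dist p (a y) - G (a y)| ≤ ε' := fun y hy =>
      Finset.le_sup' (fun y => |dist p (a y) - G (a y)|) hy
    have hε'0 : 0 ≤ ε' := by
      obtain ⟨y, hy⟩ := hne
      exact le_trans (abs_nonneg _) (hε'ge y hy)
    set h : M → ℝ := fun x => min (G x) (ε' + dist x p) with hhdef
    have hh0 : ∀ x, 0 ≤ h x := fun x =>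
      le_min (hG0 x) (add_nonneg hε'0 dist_nonneg)
    have hhle1 : ∀ x, h x ≤ 1 := fun x => le_trans (min_le_left _ _) (hGle1 x)
    have hhlip : ∀ x x' : M, |h x - h x'| ≤ dist x x' := by
      intro x x'
      refine le_trans (abs_min_sub_min_le_max _ _ _ _) (max_le (hGabs x x') ?_)
      have : (ε' + dist x p) - (ε' + dist x' p) = dist x p - dist x' p := by ring
      rw [this]
      exact abs_dist_sub_le _ _ _
    have hha : ∀ y ∈ Y, h (a y) = G (a y) := by
      intro y hy
      apply min_eq_left
      have := abs_le.1 (hε'ge y hy)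
      have hsym : dist (a y) p = dist p (a y) := dist_comm _ _
      rw [hsym]
      linarith [this.1]
    -- the finite set and Katětov condition
    set X : Finset M := insert p (Y.image a) with hXdef
    have hXA : ↑X ⊆ A := by
      intro x hx
      simp only [hXdef, Finset.coe_insert, Set.mem_insert_iff, Finset.coe_image,
        Set.mem_image, Finset.mem_coe] at hx
      rcases hx with rfl | ⟨y, _, rfl⟩
      · exact hp
      · exact haA y
    have hsum : ∀ u ∈ X, ∀ v ∈ X, dist u v ≤ h u + h v := by
      have key : ∀ v ∈ X, dist p v ≤ h p + h v := by
        intro v hv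
        simp only [hXdef, Finset.mem_insert, Finset.mem_image] at hv
        rcases hv with rfl | ⟨y, hy, rfl⟩
        · simp only [dist_self]
          exact add_nonneg (hh0 _) (hh0 _)
        · rw [hha y hy]
          rcases min_cases (G p) (ε' + dist p p) with ⟨he, -⟩ | ⟨he, -⟩ <;>
            rw [hhdef] at *
          · simp only at he ⊢
            rw [he]
            exact hGsum p (a y)
          · simp only at he ⊢
            rw [he]
            have := abs_le.1 (hε'ge y hy)
            simp only [dist_self, add_zero]
            linarith [this.2]
      intro u hu v hv
      have hu' := hu
      simp only [hXdef, Finset.mem_insert, Finset.mem_image] at hu'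
      rcases hu' with rfl | ⟨y, hy, rfl⟩
      · exact key v hv
      · have hv' := hv
        simp only [hXdef, Finset.mem_insert, Finset.mem_image] at hv'
        rcases hv' with rfl | ⟨w, hw, rfl⟩
        · rw [dist_comm]
          have := key (a y) hu
          linarith
        · rw [hha y hy, hha w hw]
          exact hGsum _ _
    obtain ⟨q, hqA, hq⟩ := hU X hXA h
      (fun x hx => ⟨hh0 x, hhle1 x⟩)
      (fun u hu v hv => ⟨hhlip u v, hsum u hu v hv⟩)
    have hqp : dist q p = h p := hq p (Finset.mem_insert_self _ _)
    have hqa : ∀ y ∈ Y, dist q (a y) = G (a y) := by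
      intro y hy
      have : a y ∈ X := by
        simp only [hXdef, Finset.mem_insert, Finset.mem_image]
        exact Or.inr ⟨y, hy, rfl⟩
      rw [hq (a y) this, hha y hy]
    refine ⟨q, hqA, ?_, ?_⟩
    · intro y hy
      have h1 : |dist q y - dist q (a y)| ≤ dist y (a y) := by
        rw [dist_comm q y, dist_comm q (a y)]
        exact abs_dist_sub_le _ _ _
      have h2 : |G (a y) - f y| ≤ δ := by
        rw [← hGvals y hy]
        exact le_trans (hGabs (a y) y) (had y)
      rw [hqa y hy] at h1
      have h3 : dist y (a y) ≤ δ := by rw [dist_comm]; exact had y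
      calc |dist q y - f y| ≤ |dist q y - G (a y)| + |G (a y) - f y| := abs_sub_le _ _ _
        _ ≤ δ + δ := add_le_add (le_trans h1 h3) h2
        _ = 2 * δ := by ring
    · rw [hqp]
      have h1 : h p ≤ ε' := le_trans (min_le_right _ _) (by simp)
      have h2 : ε' ≤ ε + 2 * δ := by
        apply Finset.sup'_le
        intro y hy
        have e1 : |dist p (a y) - dist p y| ≤ dist (a y) y := by
          rw [dist_comm p (a y), dist_comm p y]
          exact abs_dist_sub_le _ _ _
        have e2 : |G (a y) - f y| ≤ δ := by
          rw [← hGvals y hy]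
          exact le_trans (hGabs (a y) y) (had y)
        have e3 := hpε y hy
        calc |dist p (a y) - G (a y)|
            ≤ |dist p (a y) - dist p y| + |dist p y - G (a y)| := abs_sub_le _ _ _
          _ ≤ dist (a y) y + (|dist p y - f y| + |f y - G (a y)|) :=
              add_le_add e1 (abs_sub_le _ _ _)
          _ ≤ δ + (ε + δ) := by
              have := had y
              rw [abs_sub_comm] at e2
              gcongr
          _ = ε + 2 * δ := by ring
      linarith
  -- iterate: build a Cauchy sequence
  set T : ℕ → Type _ := fun n =>
    {x : M // x ∈ A ∧ ∀ y ∈ Y, |dist x y - f y| ≤ (1/2 : ℝ) ^ n} with hTdef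
  have t0 : T 0 := by
    refine ⟨p₀, hp₀A, ?_⟩
    intro y hy
    have h1 := hf01 y hy
    have h2 : dist p₀ y ≤ 1 := hdiam _ _
    have h3 : (0:ℝ) ≤ dist p₀ y := dist_nonneg
    rw [abs_le]
    constructor <;> simp <;> [linarith [h1.2]; linarith [h1.1]]
  have hstep : ∀ n : ℕ, ∀ x : T n, ∃ q : T (n+1), dist q.val x.val ≤ 2 * (1/2:ℝ)^n := by
    intro n x
    obtain ⟨xv, hxA, hxe⟩ := x
    have hδ : (0:ℝ) < (1/2:ℝ)^(n+2) := by positivity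
    obtain ⟨q, hqA, hqe, hqd⟩ := step xv hxA ((1/2:ℝ)^n) ((1/2:ℝ)^(n+2)) hδ hxe
    refine ⟨⟨q, hqA, ?_⟩, ?_⟩
    · intro y hy
      have := hqe y hy
      have h2 : 2 * (1/2:ℝ)^(n+2) = (1/2:ℝ)^(n+1) := by ring
      rw [h2] at this
      exact this
    · simp only
      have : (1/2:ℝ)^n + 2 * (1/2:ℝ)^(n+2) ≤ 2 * (1/2:ℝ)^n := by
        have h0 : (0:ℝ) ≤ (1/2:ℝ)^n := by positivity
        have he : (1/2:ℝ)^(n+2) = (1/2:ℝ)^n * (1/4) := by ring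
        linarith
      linarith
  choose s hs using hstep
  set p : ∀ n : ℕ, T n := fun n => Nat.rec t0 s n with hpdef
  have hcons : ∀ n : ℕ, dist (p n).val (p (n+1)).val ≤ 2 * (1/2:ℝ)^n := by
    intro n
    have : p (n+1) = s n (p n) := rfl
    rw [this, dist_comm]
    exact hs n (p n)
  have hcauchy : CauchySeq (fun n => (p n).val) :=
    cauchySeq_of_le_geometric (1/2 : ℝ) 2 (by norm_num) hcons
  obtain ⟨z, hz⟩ := cauchySeq_tendsto_of_complete hcauchy
  refine ⟨z, ?_⟩
  intro y hy
  have h1 : Filter.Tendsto (fun n => dist (p n).val y) Filter.atTop (nhds (dist z y)) :=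
    (Filter.Tendsto.dist hz tendsto_const_nhds)
  have h2 : Filter.Tendsto (fun n => dist (p n).val y) Filter.atTop (nhds (f y)) := by
    have hb : Filter.Tendsto (fun n => ((1/2:ℝ)^n)) Filter.atTop (nhds 0) :=
      tendsto_pow_atTop_nhds_zero_of_lt_one (by norm_num) (by norm_num)
    have : Filter.Tendsto (fun n => dist (p n).val y - f y) Filter.atTop (nhds 0) := by
      apply squeeze_zero_norm (fun n => ?_) hb
      simpa using (p n).2.2 y hy
    have := this.add_const (f y)
    simpa using this
  exact tendsto_nhds_unique h1 h2
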